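/- Let A be a naive-cellular algebra with datum (Λ, G, M, C, *), and let X ⊆ Λ be downward closed. Then I_X = Span_R{C^σ_{p,q} : the index μ of C^σ_{p,q} lies in X} is a twosided ideal of A. -/

import Mathlib

/-- In a naive-cellular algebra, for a downward closed subset `X ⊆ Λ`, the span `I_X` of
the basis elements with index in `X` is a twosided ideal. -/
theorem stmt_15 {R : Type*} [CommRing R] {A : Type*} [Ring A] [Algebra R A]
    {Λ : Type*} [PartialOrder Λ]
    (G : Λ → Type*) [∀ l, Group (G l)] [∀ l, Fintype (G l)]
    (M : Λ → Type*) [∀ l, Fintype (M l)]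
    (C : ∀ l : Λ, M l → G l → M l → A)
    (b : Module.Basis (Σ l : Λ, M l × G l × M l) R A)
    (hb : ∀ i : Σ l : Λ, M l × G l × M l, b i = C i.1 i.2.1 i.2.2.1 i.2.2.2)
    -- the anti-involution (axiom W2)
    (st : A →ₗ[R] A)
    (hanti : ∀ a c : A, st (a * c) = st c * st a)
    (hinv : ∀ a : A, st (st a) = a)
    (hst : ∀ (l : Λ) (p : M l) (σ : G l) (q : M l),
      st (C l p σ q) = C l q σ⁻¹ p)
    -- axiom (W3)
    (r : A → ∀ l : Λ, M l → G l → M l → R)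
    (hW3 : ∀ (a : A) (l : Λ) (p q : M l) (σ : G l),
      a * C l p σ q -
        ∑ σ' : G l, ∑ p' : M l, r a l p' (σ' * σ⁻¹) p • C l p' σ' q
      ∈ Submodule.span R
          {x : A | ∃ μ : Λ, μ < l ∧ ∃ p'' σ'' q'', x = C μ p'' σ'' q''})
    (X : Set Λ) (hX : IsLowerSet X) :
    ∀ a x : A,
      x ∈ Submodule.span R {y : A | ∃ l ∈ X, ∃ p σ q, y = C l p σ q} →
      a * x ∈ Submodule.span R {y : A | ∃ l ∈ X, ∃ p σ q, y = C l p σ q} ∧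
      x * a ∈ Submodule.span R {y : A | ∃ l ∈ X, ∃ p σ q, y = C l p σ q} := by

  intro a x hx
  set S : Set A := {y : A | ∃ l ∈ X, ∃ p σ q, y = C l p σ q} with hS
  set I := Submodule.span R S with hI
  -- left multiplication
  have hleft : ∀ (a : A) (x : A), x ∈ I → a * x ∈ I := by
    intro a x hx
    induction hx using Submodule.span_induction with
    | mem y hy =>
      obtain ⟨l, hl, p, σ, q, rfl⟩ := hy
      have key := hW3 a l p q σ
      have hsub : {x : A | ∃ μ : Λ, μ < l ∧ ∃ p'' σ'' q'', x = C μ p'' σ'' q''} ⊆ S := by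
        rintro z ⟨μ, hμ, p'', σ'', q'', rfl⟩
        exact ⟨μ, hX hμ.le hl, p'', σ'', q'', rfl⟩
      have h1 : a * C l p σ q -
          ∑ σ' : G l, ∑ p' : M l, r a l p' (σ' * σ⁻¹) p • C l p' σ' q ∈ I :=
        Submodule.span_mono hsub key
      have h2 : (∑ σ' : G l, ∑ p' : M l, r a l p' (σ' * σ⁻¹) p • C l p' σ' q) ∈ I := by
        refine Submodule.sum_mem _ fun σ' _ => Submodule.sum_mem _ fun p' _ => ?_
        exact Submodule.smul_mem _ _ (Submodule.subset_span ⟨l, hl, p', σ', q, rfl⟩)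
      have := I.add_mem h1 h2
      simpa using this
    | zero => simpa using I.zero_mem
    | add u v hu hv ihu ihv =>
      have := I.add_mem ihu ihv
      simpa [mul_add] using this
    | smul c u hu ihu =>
      have := I.smul_mem c ihu
      simpa [mul_smul_comm] using this
  -- st preserves I
  have hstI : ∀ (x : A), x ∈ I → st x ∈ I := by
    intro x hx
    induction hx using Submodule.span_induction with
    | mem y hy =>
      obtain ⟨l, hl, p, σ, q, rfl⟩ := hy
      rw [hst]
      exact Submodule.subset_span ⟨l, hl, q, σ⁻¹, p, rfl⟩
    | zero => simpa using I.zero_mem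
    | add u v hu hv ihu ihv =>
      have := I.add_mem ihu ihv
      simpa using this
    | smul c u hu ihu =>
      have := I.smul_mem c ihu
      simpa using this
  refine ⟨hleft a x hx, ?_⟩
  have h1 : st a * st x ∈ I := hleft (st a) (st x) (hstI x hx)
  have h2 : st (st a * st x) ∈ I := hstI _ h1
  have h3 : st (st a * st x) = x * a := by
    rw [hanti, hinv, hinv]
  rwa [h3] at h2
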